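/- Under the stated setup and algorithm with step sizes η_t = η̄ (t+1)^{−1/2} d^{−1} and δ_t = δ̄ (t+1)^{−1/4} d^{−1/2}, for each t define the gradient-descent comparison trajectory z_0(x̂_t) = x̂_t and z_{s+1}(x̂_t) = z_s(x̂_t) − η_{t+s} ∇f̃(z_s(x̂_t)). Then for every fixed positive integer S, lim_{t → ∞} sup_{0 ≤ s ≤ S} E[‖x_{t+s} − z_s(x̂_t)‖²] = 0; i.e., the gradient descent flow started at x̂_t is an asymptotic pseudotrajectory of the algorithm's iterates. -/

import Mathlib

open MeasureTheory Metric Filter ProbabilityTheory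
open scoped RealInnerProductSpace

/-- The uniform (normalized surface/Hausdorff) probability measure on the unit sphere
`S^{d-1} ⊂ ℝ^d`. -/
noncomputable def sphereUniform (d : ℕ) : Measure (EuclideanSpace ℝ (Fin d)) :=
  (μH[(d : ℝ) - 1] (sphere (0 : EuclideanSpace ℝ (Fin d)) 1))⁻¹ •
    (μH[(d : ℝ) - 1]).restrict (sphere (0 : EuclideanSpace ℝ (Fin d)) 1)

/-- The full setup of the follower-agnostic Stackelberg optimization algorithm:
leader's iterates `x`, random sphere perturbations `v`, inner-loop outputs `y` (at the
perturbed point `x̂ₜ = xₜ + δₜ vₜ`) and `ytil` (at `xₜ`), equilibrium map `S`, leader's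
objective `f`, followers' feasible set `Y`, together with all standing assumptions
(Assumptions 1–3 of the paper) and the algorithmic update rules. -/
structure StackelbergAlg (d d' : ℕ) (Ω : Type) [MeasurableSpace Ω]
    (μ : Measure Ω) (Lx Ly LS Ltil ltil C α : ℝ) (η δv : ℕ → ℝ) : Type where
  Y : Set (EuclideanSpace ℝ (Fin d'))
  f : EuclideanSpace ℝ (Fin d) → EuclideanSpace ℝ (Fin d') → ℝ
  S : EuclideanSpace ℝ (Fin d) → EuclideanSpace ℝ (Fin d')
  x : ℕ → Ω → EuclideanSpace ℝ (Fin d)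
  v : ℕ → Ω → EuclideanSpace ℝ (Fin d)
  y : ℕ → Ω → EuclideanSpace ℝ (Fin d')
  ytil : ℕ → Ω → EuclideanSpace ℝ (Fin d')
  x0 : EuclideanSpace ℝ (Fin d)
  ytil0 : EuclideanSpace ℝ (Fin d')
  /-- the contraction factor of the lower level lies in (0,1) -/
  hα : 0 < α ∧ α < 1
  hη_pos : ∀ t, 0 < η t
  hδ_pos : ∀ t, 0 < δv t
  /-- `Y` is convex and compact (and nonempty) -/
  hY_conv : Convex ℝ Y
  hY_comp : IsCompact Y
  hY_ne : Y.Nonempty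
  /-- `f` is twice continuously differentiable -/
  hf_c2 : ContDiff ℝ 2 (fun p : EuclideanSpace ℝ (Fin d) × EuclideanSpace ℝ (Fin d') => f p.1 p.2)
  /-- for every `y ∈ Y`, `f (·, y)` is `Lx`-Lipschitz -/
  hfx_lip : ∀ y' ∈ Y, ∀ x1 x2, |f x1 y' - f x2 y'| ≤ Lx * ‖x1 - x2‖
  /-- for every `x`, `f (x, ·)` is `Ly`-Lipschitz on `Y` -/
  hfy_lip : ∀ x', ∀ y1 ∈ Y, ∀ y2 ∈ Y, |f x' y1 - f x' y2| ≤ Ly * ‖y1 - y2‖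
  /-- `f (x, ·)` is `ℓy`-smooth is not needed below; the equilibrium response is
  single-valued, `Y`-valued, and `LS`-Lipschitz -/
  hS_mem : ∀ x', S x' ∈ Y
  hS_lip : ∀ x1 x2, ‖S x1 - S x2‖ ≤ LS * ‖x1 - x2‖
  /-- the hyper-objective `f̃ = f(·, S ·)` is twice continuously differentiable,
  `Ltil`-Lipschitz and `ltil`-smooth -/
  hftil_c2 : ContDiff ℝ 2 (fun z => f z (S z))
  hftil_lip : ∀ x1 x2, |f x1 (S x1) - f x2 (S x2)| ≤ Ltil * ‖x1 - x2‖
  hftil_smooth : ∀ x1 x2,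
    ‖gradient (fun z => f z (S z)) x1 - gradient (fun z => f z (S z)) x2‖ ≤ ltil * ‖x1 - x2‖
  /-- measurability of all random processes -/
  hx_meas : ∀ t, Measurable (x t)
  hv_meas : ∀ t, Measurable (v t)
  hy_meas : ∀ t, Measurable (y t)
  hytil_meas : ∀ t, Measurable (ytil t)
  /-- deterministic initial conditions -/
  hx_init : ∀ ω, x 0 ω = x0
  hytil_init : ∀ ω, ytil 0 ω = ytil0
  /-- the inner iterates lie in `Y` -/
  hy_mem : ∀ t ω, y t ω ∈ Y
  hytil_mem : ∀ t ω, ytil t ω ∈ Y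
  /-- the perturbations are unit vectors, i.i.d. uniform on the unit sphere, and `vₜ` is
  independent of the iterates generated up to time `t` -/
  hv_norm : ∀ t ω, ‖v t ω‖ = 1
  hv_law : ∀ t, Measure.map (v t) μ = sphereUniform d
  hv_iid : iIndepFun v μ
  hv_indep : ∀ t, IndepFun (v t)
      (fun ω => ((fun s : Fin (t + 1) => x s.1 ω), (fun s : Fin (t + 1) => ytil s.1 ω))) μ
  /-- inner loop guarantee (i): the two inner-loop outputs are `C δₜ`-close -/
  hy_close : ∀ t ω, ‖y t ω - ytil t ω‖ ≤ C * δv t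
  /-- inner loop guarantee (ii): contraction by a factor `α` towards the equilibrium response,
  warm-started from the previous output `ỹₜ₋₁` -/
  hy_contract : ∀ t ω, ‖y (t + 1) ω - S (x (t + 1) ω + δv (t + 1) • v (t + 1) ω)‖ ^ 2
      ≤ α * ‖ytil t ω - S (x (t + 1) ω + δv (t + 1) • v (t + 1) ω)‖ ^ 2
  hytil_contract : ∀ t ω, ‖ytil (t + 1) ω - S (x (t + 1) ω)‖ ^ 2
      ≤ α * ‖ytil t ω - S (x (t + 1) ω)‖ ^ 2
  /-- the leader's update `x_{t+1} = x_t − η_t F̂_t` with the two-point estimator `F̂_t` -/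
  hx_upd : ∀ t ω, x (t + 1) ω = x t ω - η t •
      ((((d : ℝ) / δv t) * (f (x t ω + δv t • v t ω) (y t ω) - f (x t ω) (ytil t ω))) • v t ω)

namespace StackelbergAlg

variable {d d' : ℕ} {Ω : Type} [MeasurableSpace Ω] {μ : Measure Ω}
  {Lx Ly LS Ltil ltil C α : ℝ} {η δv : ℕ → ℝ}

/-- The hyper-objective `f̃(x) = f(x, S(x))`. -/
noncomputable def ftil (A : StackelbergAlg d d' Ω μ Lx Ly LS Ltil ltil C α η δv) :
    EuclideanSpace ℝ (Fin d) → ℝ := fun z => A.f z (A.S z)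

/-- The perturbed query point `x̂ₜ = xₜ + δₜ vₜ`. -/
noncomputable def xhat (A : StackelbergAlg d d' Ω μ Lx Ly LS Ltil ltil C α η δv)
    (t : ℕ) (ω : Ω) : EuclideanSpace ℝ (Fin d) := A.x t ω + δv t • A.v t ω

/-- The two-point zeroth-order gradient estimator `F̂ₜ`. -/
noncomputable def Fhat (A : StackelbergAlg d d' Ω μ Lx Ly LS Ltil ltil C α η δv)
    (t : ℕ) (ω : Ω) : EuclideanSpace ℝ (Fin d) :=
  (((d : ℝ) / δv t) * (A.f (A.xhat t ω) (A.y t ω) - A.f (A.x t ω) (A.ytil t ω))) • A.v t ω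

end StackelbergAlg

/-- The exact gradient-descent comparison trajectory started at `x₀` at stage `t`:
`z_0 = x₀`, `z_{s+1} = z_s − η_{t+s} ∇f̃(z_s)`. -/
noncomputable def gdTraj {d : ℕ} (g : EuclideanSpace ℝ (Fin d) → ℝ) (η : ℕ → ℝ)
    (t : ℕ) (x0 : EuclideanSpace ℝ (Fin d)) : ℕ → EuclideanSpace ℝ (Fin d)
  | 0 => x0
  | s + 1 => gdTraj g η t x0 s - η (t + s) • gradient g (gdTraj g η t x0 s)

set_option maxHeartbeats 1000000 in
/-- Auxiliary: the pseudotrajectory property holds for any step sizes/radii that are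
positive (guaranteed by the structure), with `η` antitone-in-shift and both tending to `0`. -/
theorem aux_pseudotraj
    (d d' : ℕ) (hd : 1 ≤ d)
    (Lx Ly LS Ltil ltil C α : ℝ) (η δf : ℕ → ℝ)
    (hLx : 0 < Lx) (hLy : 0 < Ly) (hLtil : 0 < Ltil) (hC : 0 < C)
    (hη_mono : ∀ t s : ℕ, η (t + s) ≤ η t)
    (hη0 : Tendsto η atTop (nhds 0)) (hδ0 : Tendsto δf atTop (nhds 0))
    (Ω : Type) [MeasurableSpace Ω] (μ : Measure Ω) [IsProbabilityMeasure μ]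
    (A : StackelbergAlg d d' Ω μ Lx Ly LS Ltil ltil C α η δf) :
    ∀ S : ℕ, 0 < S →
      Tendsto (fun t : ℕ => ⨆ s : Fin (S + 1),
          ∫ ω, ‖A.x (t + s.1) ω - gdTraj A.ftil η t (A.xhat t ω) s.1‖ ^ 2 ∂μ)
        atTop (nhds 0) := by
  classical
  intro S hS
  have hd0 : (0 : ℝ) < d := by exact_mod_cast hd
  have hη_pos : ∀ t, 0 < η t := A.hη_pos
  have hδ_pos : ∀ t, 0 < δf t := A.hδ_pos
  set K : ℝ := (d : ℝ) * (Lx + Ly * C) + Ltil with hKdef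
  have hK_pos : 0 < K := by positivity
  -- gradient of ftil is bounded by Ltil
  have hlip : LipschitzWith ⟨Ltil, hLtil.le⟩ A.ftil := by
    apply LipschitzWith.of_dist_le_mul
    intro x1 x2
    rw [Real.dist_eq, dist_eq_norm]
    exact A.hftil_lip x1 x2
  have hgrad_norm : ∀ z, ‖gradient A.ftil z‖ = ‖fderiv ℝ A.ftil z‖ := by
    intro z
    rw [gradient]
    exact LinearIsometryEquiv.norm_map _ _
  have hgrad_bound : ∀ z, ‖gradient A.ftil z‖ ≤ Ltil := by
    intro z
    rw [hgrad_norm]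
    exact norm_fderiv_le_of_lipschitz ℝ hlip
  have hgrad_cont : Continuous (gradient A.ftil) := by
    have h1 : Continuous (fderiv ℝ A.ftil) := A.hftil_c2.continuous_fderiv two_ne_zero
    exact (LinearIsometryEquiv.continuous _).comp h1
  -- the key deterministic bound
  have key : ∀ t s (ω : Ω),
      ‖A.x (t + s) ω - gdTraj A.ftil η t (A.xhat t ω) s‖ ≤ δf t + s * η t * K := by
    intro t s ω
    induction s with
    | zero =>
      simp only [Nat.add_zero, gdTraj, StackelbergAlg.xhat, Nat.cast_zero, zero_mul, zero_mul,
        add_zero]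
      have : A.x t ω - (A.x t ω + δf t • A.v t ω) = -(δf t • A.v t ω) := by abel
      rw [this, norm_neg, norm_smul, A.hv_norm t ω, mul_one, Real.norm_eq_abs,
        abs_of_pos (hδ_pos t)]
    | succ s ih =>
      have hupd := A.hx_upd (t + s) ω
      set G : EuclideanSpace ℝ (Fin d) :=
        (((d : ℝ) / δf (t + s)) * (A.f (A.x (t + s) ω + δf (t + s) • A.v (t + s) ω)
          (A.y (t + s) ω) - A.f (A.x (t + s) ω) (A.ytil (t + s) ω))) • A.v (t + s) ω with hGdef
      have hGbound : ‖G‖ ≤ (d : ℝ) * (Lx + Ly * C) := by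
        rw [hGdef, norm_smul, A.hv_norm (t + s) ω, mul_one, Real.norm_eq_abs, abs_mul,
          abs_of_pos (div_pos hd0 (hδ_pos (t + s)))]
        have h1 : |A.f (A.x (t + s) ω + δf (t + s) • A.v (t + s) ω) (A.y (t + s) ω)
            - A.f (A.x (t + s) ω) (A.ytil (t + s) ω)| ≤ Lx * δf (t + s) + Ly * (C * δf (t + s)) := by
          have ha := A.hfx_lip (A.y (t + s) ω) (A.hy_mem (t + s) ω)
            (A.x (t + s) ω + δf (t + s) • A.v (t + s) ω) (A.x (t + s) ω)
          have hb := A.hfy_lip (A.x (t + s) ω) (A.y (t + s) ω) (A.hy_mem (t + s) ω)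
            (A.ytil (t + s) ω) (A.hytil_mem (t + s) ω)
          have hnorm1 : ‖A.x (t + s) ω + δf (t + s) • A.v (t + s) ω - A.x (t + s) ω‖
              = δf (t + s) := by
            have : A.x (t + s) ω + δf (t + s) • A.v (t + s) ω - A.x (t + s) ω
                = δf (t + s) • A.v (t + s) ω := by abel
            rw [this, norm_smul, A.hv_norm (t + s) ω, mul_one, Real.norm_eq_abs,
              abs_of_pos (hδ_pos (t + s))]
          have hyc := A.hy_close (t + s) ω
          rw [hnorm1] at ha
          calc |A.f (A.x (t + s) ω + δf (t + s) • A.v (t + s) ω) (A.y (t + s) ω)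
              - A.f (A.x (t + s) ω) (A.ytil (t + s) ω)|
              ≤ |A.f (A.x (t + s) ω + δf (t + s) • A.v (t + s) ω) (A.y (t + s) ω)
                - A.f (A.x (t + s) ω) (A.y (t + s) ω)|
                + |A.f (A.x (t + s) ω) (A.y (t + s) ω)
                - A.f (A.x (t + s) ω) (A.ytil (t + s) ω)| := abs_sub_le _ _ _
            _ ≤ Lx * δf (t + s) + Ly * (C * δf (t + s)) :=
                add_le_add ha (le_trans hb (by nlinarith [hLy.le, hyc]))
        refine le_trans (mul_le_mul_of_nonneg_left h1 (div_pos hd0 (hδ_pos (t + s))).le) (le_of_eq ?_)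
        have hδne : δf (t + s) ≠ 0 := (hδ_pos (t + s)).ne'
        field_simp
      have hz : gdTraj A.ftil η t (A.xhat t ω) (s + 1)
          = gdTraj A.ftil η t (A.xhat t ω) s
            - η (t + s) • gradient A.ftil (gdTraj A.ftil η t (A.xhat t ω) s) := rfl
      have hx1 : A.x (t + (s + 1)) ω = A.x (t + s) ω - η (t + s) • G := by
        rw [show t + (s + 1) = (t + s) + 1 from rfl, hupd]
      rw [hx1, hz]
      have hre : A.x (t + s) ω - η (t + s) • G
          - (gdTraj A.ftil η t (A.xhat t ω) s
            - η (t + s) • gradient A.ftil (gdTraj A.ftil η t (A.xhat t ω) s))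
          = (A.x (t + s) ω - gdTraj A.ftil η t (A.xhat t ω) s)
            + η (t + s) • (gradient A.ftil (gdTraj A.ftil η t (A.xhat t ω) s) - G) := by
        rw [smul_sub]; abel
      rw [hre]
      calc ‖(A.x (t + s) ω - gdTraj A.ftil η t (A.xhat t ω) s)
            + η (t + s) • (gradient A.ftil (gdTraj A.ftil η t (A.xhat t ω) s) - G)‖
          ≤ ‖A.x (t + s) ω - gdTraj A.ftil η t (A.xhat t ω) s‖
            + ‖η (t + s) • (gradient A.ftil (gdTraj A.ftil η t (A.xhat t ω) s) - G)‖ :=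
            norm_add_le _ _
        _ ≤ (δf t + s * η t * K) + η (t + s) * K := by
            refine add_le_add ih ?_
            rw [norm_smul, Real.norm_eq_abs, abs_of_pos (hη_pos (t + s))]
            refine mul_le_mul_of_nonneg_left ?_ (hη_pos (t + s)).le
            calc ‖gradient A.ftil (gdTraj A.ftil η t (A.xhat t ω) s) - G‖
                ≤ ‖gradient A.ftil (gdTraj A.ftil η t (A.xhat t ω) s)‖ + ‖G‖ := norm_sub_le _ _
              _ ≤ Ltil + (d : ℝ) * (Lx + Ly * C) := add_le_add (hgrad_bound _) hGbound
              _ = K := by rw [hKdef]; ring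
        _ ≤ δf t + (s + 1 : ℕ) * η t * K := by
            have := hη_mono t s
            have h2 : η (t + s) * K ≤ η t * K := mul_le_mul_of_nonneg_right this hK_pos.le
            push_cast
            nlinarith [hη_pos t, hK_pos, Nat.cast_nonneg (α := ℝ) s]
  -- measurability / continuity
  have hxhat_meas : ∀ t, Measurable (A.xhat t) := by
    intro t
    exact (A.hx_meas t).add ((A.hv_meas t).const_smul (δf t))
  have hz_cont : ∀ t s, Continuous (fun x0 => gdTraj A.ftil η t x0 s) := by
    intro t s
    induction s with
    | zero => exact continuous_id
    | succ s ih =>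
      exact ih.sub ((hgrad_cont.comp ih).const_smul (η (t + s)))
  -- bound on integrals
  set c : ℕ → ℝ := fun t => (δf t + S * η t * K) ^ 2 with hcdef
  have hc_nonneg : ∀ t, 0 ≤ c t := fun t => sq_nonneg _
  have hbound_ptwise : ∀ t (s : ℕ), s ≤ S → ∀ ω,
      ‖A.x (t + s) ω - gdTraj A.ftil η t (A.xhat t ω) s‖ ^ 2 ≤ c t := by
    intro t s hsS ω
    have h1 := key t s ω
    have h2 : (0:ℝ) ≤ δf t + s * η t * K := le_trans (norm_nonneg _) h1
    have h3 : δf t + s * η t * K ≤ δf t + S * η t * K := by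
      have : (s : ℝ) ≤ S := by exact_mod_cast hsS
      nlinarith [mul_le_mul_of_nonneg_right this (mul_nonneg (hη_pos t).le hK_pos.le)]
    calc ‖A.x (t + s) ω - gdTraj A.ftil η t (A.xhat t ω) s‖ ^ 2
        ≤ (δf t + s * η t * K) ^ 2 := by
          exact pow_le_pow_left₀ (norm_nonneg _) h1 2
      _ ≤ c t := by
          rw [hcdef]
          exact pow_le_pow_left₀ h2 h3 2
  have hmeas : ∀ t (s : ℕ), Measurable
      (fun ω => ‖A.x (t + s) ω - gdTraj A.ftil η t (A.xhat t ω) s‖ ^ 2) := by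
    intro t s
    exact (((A.hx_meas (t + s)).sub
      ((hz_cont t s).measurable.comp (hxhat_meas t))).norm.pow_const 2)
  have hint : ∀ t (s : ℕ), s ≤ S → Integrable
      (fun ω => ‖A.x (t + s) ω - gdTraj A.ftil η t (A.xhat t ω) s‖ ^ 2) μ := by
    intro t s hsS
    refine ⟨(hmeas t s).aestronglyMeasurable, ?_⟩
    apply HasFiniteIntegral.of_bounded (C := c t)
    filter_upwards with ω
    rw [Real.norm_eq_abs, abs_of_nonneg (by positivity)]
    exact hbound_ptwise t s hsS ω
  have hI_le : ∀ t (s : ℕ), s ≤ S →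
      (∫ ω, ‖A.x (t + s) ω - gdTraj A.ftil η t (A.xhat t ω) s‖ ^ 2 ∂μ) ≤ c t := by
    intro t s hsS
    calc (∫ ω, ‖A.x (t + s) ω - gdTraj A.ftil η t (A.xhat t ω) s‖ ^ 2 ∂μ)
        ≤ ∫ _, c t ∂μ := by
          exact integral_mono (hint t s hsS) (integrable_const _) (hbound_ptwise t s hsS)
      _ = c t := by simp
  have hI_nonneg : ∀ t (s : ℕ),
      0 ≤ ∫ ω, ‖A.x (t + s) ω - gdTraj A.ftil η t (A.xhat t ω) s‖ ^ 2 ∂μ :=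
    fun t s => integral_nonneg (fun ω => by positivity)
  -- squeeze
  have hsup_le : ∀ t, (⨆ s : Fin (S + 1),
      ∫ ω, ‖A.x (t + s.1) ω - gdTraj A.ftil η t (A.xhat t ω) s.1‖ ^ 2 ∂μ) ≤ c t := by
    intro t
    exact ciSup_le fun s => hI_le t s.1 (Nat.lt_succ_iff.mp s.isLt)
  have hsup_nonneg : ∀ t, 0 ≤ (⨆ s : Fin (S + 1),
      ∫ ω, ‖A.x (t + s.1) ω - gdTraj A.ftil η t (A.xhat t ω) s.1‖ ^ 2 ∂μ) := by
    intro t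
    refine le_ciSup_of_le (Set.Finite.bddAbove (Set.finite_range _)) (0 : Fin (S + 1)) ?_
    exact hI_nonneg t 0
  have hc_tendsto : Tendsto c atTop (nhds 0) := by
    have hsum : Tendsto (fun t => δf t + S * η t * K) atTop (nhds 0) := by
      have h2 := ((hη0.const_mul (S : ℝ)).mul_const K)
      have h3 := hδ0.add h2
      simp only [mul_zero, zero_mul, add_zero, zero_add] at h3
      exact h3
    have h4 := hsum.pow 2
    simp only [ne_eq, OfNat.ofNat_ne_zero, not_false_eq_true, zero_pow] at h4
    exact h4
  exact squeeze_zero hsup_nonneg hsup_le hc_tendsto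

set_option maxHeartbeats 1000000 in
set_option maxHeartbeats 2000000 in
/-- **Lemma 3 (asymptotic pseudotrajectory).** With step sizes `ηₜ = η̄ (t+1)^{-1/2} d⁻¹`
and `δₜ = δ̄ (t+1)^{-1/4} d^{-1/2}`, for every fixed positive integer `S`,
`lim_{t→∞} sup_{0 ≤ s ≤ S} E[‖x_{t+s} − z_s(x̂_t)‖²] = 0`, where `z` is the exact gradient
descent trajectory started at the perturbed point `x̂ₜ`. -/
theorem gradient_descent_is_asymptotic_pseudotrajectory
    (d d' : ℕ) (hd : 1 ≤ d)
    (Lx Ly LS Ltil ltil C α ηbar δbar : ℝ)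
    (hLx : 0 < Lx) (hLy : 0 < Ly) (hLS : 0 < LS) (hLtil : 0 < Ltil) (hltil : 0 < ltil)
    (hC : 0 < C) (hηbar : 0 < ηbar) (hδbar : 0 < δbar)
    (Ω : Type) [MeasurableSpace Ω] (μ : Measure Ω) [IsProbabilityMeasure μ]
    (A : StackelbergAlg d d' Ω μ Lx Ly LS Ltil ltil C α
      (fun t => ηbar * ((t : ℝ) + 1) ^ (-(1/2 : ℝ)) * (d : ℝ)⁻¹)
      (fun t => δbar * ((t : ℝ) + 1) ^ (-(1/4 : ℝ)) * (d : ℝ) ^ (-(1/2 : ℝ)))) :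
    ∀ S : ℕ, 0 < S →
      Tendsto (fun t : ℕ => ⨆ s : Fin (S + 1),
          ∫ ω, ‖A.x (t + s.1) ω
              - gdTraj A.ftil (fun r => ηbar * ((r : ℝ) + 1) ^ (-(1/2 : ℝ)) * (d : ℝ)⁻¹)
                  t (A.xhat t ω) s.1‖ ^ 2 ∂μ)
        atTop (nhds 0) := by
  intro S hS
  have hd0 : (0 : ℝ) < d := by exact_mod_cast hd
  have hnat : Tendsto (fun t : ℕ => (t : ℝ) + 1) atTop atTop :=
    tendsto_atTop_add_const_right _ 1 tendsto_natCast_atTop_atTop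
  have hδ0 : Tendsto (fun t : ℕ => δbar * ((t : ℝ) + 1) ^ (-(1/4 : ℝ)) * (d : ℝ) ^ (-(1/2 : ℝ)))
      atTop (nhds 0) := by
    have h1 : Tendsto (fun t : ℕ => ((t : ℝ) + 1) ^ (-(1/4 : ℝ))) atTop (nhds 0) :=
      (tendsto_rpow_neg_atTop (by norm_num)).comp hnat
    have h2 := (h1.const_mul δbar).mul_const ((d : ℝ) ^ (-(1/2 : ℝ)))
    simpa using h2
  have hη0 : Tendsto (fun t : ℕ => ηbar * ((t : ℝ) + 1) ^ (-(1/2 : ℝ)) * (d : ℝ)⁻¹)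
      atTop (nhds 0) := by
    have h1 : Tendsto (fun t : ℕ => ((t : ℝ) + 1) ^ (-(1/2 : ℝ))) atTop (nhds 0) :=
      (tendsto_rpow_neg_atTop (by norm_num)).comp hnat
    have h2 := (h1.const_mul ηbar).mul_const ((d : ℝ)⁻¹)
    simpa using h2
  have hη_mono : ∀ t s : ℕ, ηbar * ((((t + s) : ℕ) : ℝ) + 1) ^ (-(1/2 : ℝ)) * (d : ℝ)⁻¹
      ≤ ηbar * ((t : ℝ) + 1) ^ (-(1/2 : ℝ)) * (d : ℝ)⁻¹ := by
    intro t s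
    have h1 : ((t : ℝ) + s + 1) ^ (-(1/2 : ℝ)) ≤ ((t : ℝ) + 1) ^ (-(1/2 : ℝ)) :=
      Real.rpow_le_rpow_of_nonpos (by positivity)
        (by linarith [Nat.cast_nonneg (α := ℝ) s]) (by norm_num)
    push_cast
    have h2 := mul_le_mul_of_nonneg_left h1 hηbar.le
    have h3 := mul_le_mul_of_nonneg_right h2 (inv_nonneg.2 hd0.le)
    linarith
  exact aux_pseudotraj d d' hd Lx Ly LS Ltil ltil C α _ _ hLx hLy hLtil hC
    hη_mono hη0 hδ0 Ω μ A S hS
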